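/- arXiv:2601.13776 — 2 statements merged into one kernel-verified Lean document; each statement's English description precedes it below -/
import Mathlib

section
/- Let f : ℝⁿ → ℝⁿ be 1-Lipschitz and ε ≥ 0. Then the map x ↦ sqrt((1/2)x² + (1/2)f(x)² + ε) (applied coordinatewise, where the squares are coordinatewise) is 1-Lipschitz with respect to the Euclidean norm. -/
lemma l2res_key (a b c d ε : ℝ) (hε : 0 ≤ ε) :
    (Real.sqrt ((1/2) * a^2 + (1/2) * b^2 + ε) -
      Real.sqrt ((1/2) * c^2 + (1/2) * d^2 + ε))^2 ≤
    (1/2) * (a - c)^2 + (1/2) * (b - d)^2 := by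
  set s := (1/2) * a^2 + (1/2) * b^2 + ε with hs
  set t := (1/2) * c^2 + (1/2) * d^2 + ε with ht
  have hs0 : 0 ≤ s := by positivity
  have ht0 : 0 ≤ t := by positivity
  have hss : Real.sqrt s ^ 2 = s := Real.sq_sqrt hs0
  have hts : Real.sqrt t ^ 2 = t := Real.sq_sqrt ht0
  have hcs : (a*c + b*d + 2*ε)^2 ≤ (2*s) * (2*t) := by
    rw [hs, ht]; nlinarith [sq_nonneg (a*d - b*c), sq_nonneg (a - c), sq_nonneg (b - d),
      mul_nonneg hε (sq_nonneg (a - c)), mul_nonneg hε (sq_nonneg (b - d))]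
  have h1 : a*c + b*d + 2*ε ≤ 2 * (Real.sqrt s * Real.sqrt t) := by
    have h2 : a*c + b*d + 2*ε ≤ Real.sqrt ((2*s) * (2*t)) := by
      calc a*c + b*d + 2*ε ≤ |a*c + b*d + 2*ε| := le_abs_self _
        _ = Real.sqrt ((a*c + b*d + 2*ε)^2) := (Real.sqrt_sq_eq_abs _).symm
        _ ≤ Real.sqrt ((2*s) * (2*t)) := Real.sqrt_le_sqrt hcs
    have h3 : Real.sqrt ((2*s) * (2*t)) = 2 * (Real.sqrt s * Real.sqrt t) := by
      rw [show (2*s) * (2*t) = 4 * (s * t) by ring, Real.sqrt_mul (by norm_num),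
        Real.sqrt_mul hs0, show (4:ℝ) = 2^2 by norm_num, Real.sqrt_sq (by norm_num)]
    linarith [h3 ▸ h2]
  calc (Real.sqrt s - Real.sqrt t)^2
      = Real.sqrt s ^ 2 - 2*(Real.sqrt s * Real.sqrt t) + Real.sqrt t ^ 2 := by ring
    _ = s + t - 2*(Real.sqrt s * Real.sqrt t) := by rw [hss, hts]; ring
    _ ≤ s + t - (a*c + b*d + 2*ε) := by linarith
    _ = (1/2) * (a - c)^2 + (1/2) * (b - d)^2 := by rw [hs, ht]; ring

lemma euclidean_coord_dist_le {n : ℕ} (x y : EuclideanSpace ℝ (Fin n)) (i : Fin n) :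
    dist (x i) (y i) ≤ dist x y := by
  rw [EuclideanSpace.dist_eq]
  calc dist (x i) (y i) = Real.sqrt (dist (x i) (y i) ^ 2) :=
        (Real.sqrt_sq dist_nonneg).symm
    _ ≤ Real.sqrt (∑ j, dist (x j) (y j) ^ 2) :=
        Real.sqrt_le_sqrt (Finset.single_le_sum (f := fun j => dist (x j) (y j) ^ 2) (fun j _ => sq_nonneg _) (Finset.mem_univ i))

/-- L2NormResidual: if `f` is 1-Lipschitz and `ε ≥ 0`, the coordinatewise map
`x ↦ √(x_i²/2 + f(x)_i²/2 + ε)` is 1-Lipschitz for the Euclidean norm. -/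
theorem l2norm_residual_lipschitz {n : ℕ}
    (f : EuclideanSpace ℝ (Fin n) → EuclideanSpace ℝ (Fin n))
    (hf : LipschitzWith 1 f) (ε : ℝ) (hε : 0 ≤ ε) :
    LipschitzWith 1 (fun x : EuclideanSpace ℝ (Fin n) =>
      (WithLp.toLp 2 (fun i => Real.sqrt ((1 / 2) * (x i) ^ 2 + (1 / 2) * (f x i) ^ 2 + ε)) :
        EuclideanSpace ℝ (Fin n))) := by
  apply LipschitzWith.of_dist_le_mul
  intro x y
  rw [NNReal.coe_one, one_mul]
  have hdf : dist (f x) (f y) ≤ dist x y := by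
    have := hf.dist_le_mul x y; simpa using this
  have hdf2 : ∑ i, dist (f x i) (f y i) ^ 2 ≤ ∑ i, dist (x i) (y i) ^ 2 := by
    have h := pow_le_pow_left₀ dist_nonneg hdf 2
    rw [EuclideanSpace.dist_eq, EuclideanSpace.dist_eq x y,
      Real.sq_sqrt (Finset.sum_nonneg fun _ _ => sq_nonneg _),
      Real.sq_sqrt (Finset.sum_nonneg fun _ _ => sq_nonneg _)] at h
    exact h
  rw [EuclideanSpace.dist_eq, EuclideanSpace.dist_eq x y]
  apply Real.sqrt_le_sqrt
  calc _ ≤ ∑ i, ((1/2) * dist (x i) (y i) ^ 2 + (1/2) * dist (f x i) (f y i) ^ 2) :=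
        Finset.sum_le_sum fun i _ => by
          simp only [PiLp.toLp_apply, Real.dist_eq, sq_abs]
          exact l2res_key (x i) (f x i) (y i) (f y i) ε hε
    _ = (1/2) * ∑ i, dist (x i) (y i) ^ 2 + (1/2) * ∑ i, dist (f x i) (f y i) ^ 2 := by
        rw [Finset.sum_add_distrib, Finset.mul_sum, Finset.mul_sum]
    _ ≤ ∑ i, dist (x i) (y i) ^ 2 := by linarith
end

section
/- For any diagonal matrix D ∈ ℝ^{m×m} with diagonal entries in [0,1] and any W ∈ ℝ^{m×n} with WᵀW ≼ I (i.e., ‖W‖₂ ≤ 1), the matrix I - 2WᵀDW has spectral norm at most 1. -/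
open Matrix

private lemma psd_add {k : ℕ} {A B : Matrix (Fin k) (Fin k) ℝ}
    (hA : A.PosSemidef) (hB : B.PosSemidef) : (A + B).PosSemidef := by
  exact hA.add hB

private lemma psd_smul {k : ℕ} {A : Matrix (Fin k) (Fin k) ℝ} {c : ℝ}
    (hA : A.PosSemidef) (hc : 0 ≤ c) : (c • A).PosSemidef := by
  exact hA.smul hc

/-- If `D = diagonal d` with `d i ∈ [0,1]` and `WᵀW ≼ I`, then
`I - 2 Wᵀ D W` has spectral norm at most 1. -/
theorem sll_jacobian_spectral_norm_le_one {m n : ℕ} (d : Fin m → ℝ)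
    (hd : ∀ i, d i ∈ Set.Icc (0 : ℝ) 1)
    (W : Matrix (Fin m) (Fin n) ℝ)
    (hW : ((1 : Matrix (Fin n) (Fin n) ℝ) - Wᵀ * W).PosSemidef) :
    ‖(toEuclideanCLM (𝕜 := ℝ)
        ((1 : Matrix (Fin n) (Fin n) ℝ) - (2 : ℝ) • (Wᵀ * diagonal d * W)) :
        EuclideanSpace ℝ (Fin n) →L[ℝ] EuclideanSpace ℝ (Fin n))‖ ≤ 1 := by
  have hct : ∀ {p q : ℕ} (M : Matrix (Fin p) (Fin q) ℝ), Mᴴ = Mᵀ := fun M =>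
    conjTranspose_eq_transpose_of_trivial M
  set B : Matrix (Fin n) (Fin n) ℝ := Wᵀ * diagonal d * W with hBdef
  -- B is PSD
  have hB : B.PosSemidef := by
    have := (Matrix.PosSemidef.diagonal (d := d)
      (fun i => (hd i).1)).conjTranspose_mul_mul_same W
    rwa [hct] at this
  -- 1 - B is PSD
  have h1B : ((1 : Matrix (Fin n) (Fin n) ℝ) - B).PosSemidef := by
    have h2 : (Wᵀ * diagonal (fun i => 1 - d i) * W).PosSemidef := by
      have := (Matrix.PosSemidef.diagonal (d := fun i => 1 - d i)
        (fun i => by simp only [Pi.zero_apply]; linarith [(hd i).2])).conjTranspose_mul_mul_same W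
      rwa [hct] at this
    have key : (1 : Matrix (Fin n) (Fin n) ℝ) - B
        = ((1 : Matrix (Fin n) (Fin n) ℝ) - Wᵀ * W)
          + Wᵀ * diagonal (fun i => 1 - d i) * W := by
      have : diagonal (fun i => 1 - d i)
          = (1 : Matrix (Fin m) (Fin m) ℝ) - diagonal d := by
        rw [← diagonal_one, diagonal_sub]
      rw [this]
      simp only [hBdef, Matrix.mul_sub, Matrix.sub_mul, Matrix.mul_one]
      abel
    rw [key]
    exact psd_add hW h2
  set A : Matrix (Fin n) (Fin n) ℝ :=
    (1 : Matrix (Fin n) (Fin n) ℝ) - (2 : ℝ) • B with hAdef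
  -- A is symmetric
  have hAherm : A.IsHermitian := by
    have : ((2 : ℝ) • B).IsHermitian := by
      unfold Matrix.IsHermitian
      rw [conjTranspose_smul, hB.1.eq]; simp
    exact (Matrix.isHermitian_one).sub this
  -- 1 - A * A is PSD
  have hM : ((1 : Matrix (Fin n) (Fin n) ℝ) - A * A).PosSemidef := by
    open scoped MatrixOrder in
    set S := CFC.sqrt B with hSdef
    open scoped MatrixOrder in
    have hSS : S * S = B := CFC.sqrt_mul_sqrt_self B hB.nonneg
    open scoped MatrixOrder in
    have hSh : Sᴴ = S := (CFC.sqrt_nonneg B).posSemidef.1.eq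
    have hconj : (Sᴴ * ((1 : Matrix (Fin n) (Fin n) ℝ) - B) * S).PosSemidef :=
      h1B.conjTranspose_mul_mul_same S
    have hBB : Sᴴ * ((1 : Matrix (Fin n) (Fin n) ℝ) - B) * S = B - B * B := by
      rw [hSh, Matrix.mul_sub, Matrix.sub_mul, Matrix.mul_one, hSS, ← hSS]
      simp only [Matrix.mul_assoc]
    have hkey : (1 : Matrix (Fin n) (Fin n) ℝ) - A * A
        = (4 : ℝ) • (Sᴴ * ((1 : Matrix (Fin n) (Fin n) ℝ) - B) * S) := by
      rw [hBB, hAdef]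
      have h2s : B * ((2 : ℝ) • B) = (2 : ℝ) • (B * B) := Matrix.mul_smul ..
      rw [Matrix.sub_mul, Matrix.mul_sub, Matrix.mul_sub, Matrix.one_mul,
        Matrix.mul_one, smul_mul_assoc, h2s, smul_smul]
      simp only [Matrix.one_mul]
      ext i j
      simp only [Matrix.sub_apply, Matrix.smul_apply, Matrix.one_apply, smul_eq_mul,
        Matrix.add_apply]
      ring
    rw [hkey]
    exact psd_smul hconj (by norm_num)
  -- conclude
  refine ContinuousLinearMap.opNorm_le_bound _ zero_le_one fun x => ?_
  rw [one_mul]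
  set x' : Fin n → ℝ := (WithLp.equiv 2 (Fin n → ℝ)) x with hx'
  have happ : (WithLp.equiv 2 (Fin n → ℝ))
      ((toEuclideanCLM (𝕜 := ℝ) A) x) = A *ᵥ x' := by
    rfl
  have hq := hM.dotProduct_mulVec_nonneg x'
  rw [sub_mulVec, dotProduct_sub, one_mulVec, star_trivial] at hq
  have hAA : x' ⬝ᵥ (A * A) *ᵥ x' = (A *ᵥ x') ⬝ᵥ (A *ᵥ x') := by
    have hA' : Aᵀ = A := by rw [← hct]; exact hAherm.eq
    rw [← mulVec_mulVec, dotProduct_mulVec]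
    conv_lhs => rw [← hA', vecMul_transpose]
    rw [hA']
  rw [hAA, sub_nonneg] at hq
  -- translate to norms
  have hnTx : ‖(toEuclideanCLM (𝕜 := ℝ) A) x‖ ^ 2 = (A *ᵥ x') ⬝ᵥ (A *ᵥ x') := by
    rw [EuclideanSpace.norm_eq, Real.sq_sqrt (by positivity)]
    simp only [dotProduct]
    congr 1
    ext i
    rw [← happ]
    simp [Real.norm_eq_abs, sq_abs, sq]
  have hnx : ‖x‖ ^ 2 = x' ⬝ᵥ x' := by
    rw [EuclideanSpace.norm_eq, Real.sq_sqrt (by positivity)]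
    simp only [dotProduct]
    congr 1
    ext i
    rw [Real.norm_eq_abs, sq_abs, sq]
    rfl
  have h2 : ‖(toEuclideanCLM (𝕜 := ℝ) A) x‖ ^ 2 ≤ ‖x‖ ^ 2 := by
    rw [hnTx, hnx]; exact hq
  nlinarith [h2, norm_nonneg ((toEuclideanCLM (𝕜 := ℝ) A) x), norm_nonneg x]
end
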